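/- Let n ≥ 3, let r be a real number with √2 < r ≤ √3, let Q = [0, 2n] × [0, 2r] ⊆ ℝ², and let W = {(2i−1, r) : i = 1, …, n} be the 1×n grid placement. Then for every real y with 0 < y < 2(r − √2), the single point p = (3, r + y) satisfies μ({q ∈ Q : dist(q, p) < infDist(q, W)}) > 2r. (For r > √2, Barney's first point can steal strictly more than μ(Q)/(2n) from the 1×n grid.) -/

import Mathlib

open MeasureTheory Metric Set
open scoped ENNReal

/-- The point `(x, y)` in the Euclidean plane. -/
noncomputable def pt (x y : ℝ) : EuclideanSpace ℝ (Fin 2) :=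
  (WithLp.equiv 2 (Fin 2 → ℝ)).symm ![x, y]

/-- The rectangular board `[0, 2n] × [0, 2r]`. -/
def bigBoard (n : ℕ) (r : ℝ) : Set (EuclideanSpace ℝ (Fin 2)) :=
  {q | q 0 ∈ Set.Icc (0:ℝ) (2 * n) ∧ q 1 ∈ Set.Icc (0:ℝ) (2 * r)}

lemma aux_dist_pt_lt {q : EuclideanSpace ℝ (Fin 2)} {x z x' z' : ℝ}
    (h : (q 0 - x)^2 + (q 1 - z)^2 < (q 0 - x')^2 + (q 1 - z')^2) :
    dist q (pt x z) < dist q (pt x' z') := by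
  rw [EuclideanSpace.dist_eq, EuclideanSpace.dist_eq]
  apply Real.sqrt_lt_sqrt (by positivity)
  simpa [pt, Fin.sum_univ_two, Real.dist_eq, sq_abs] using h

lemma aux_swap_mp : MeasurePreserving
    (fun q : EuclideanSpace ℝ (Fin 2) => ((q 1 : ℝ), (q 0 : ℝ))) volume volume := by
  have e1 := EuclideanSpace.volume_preserving_symm_measurableEquiv_toLp (Fin 2)
  have e2 := volume_preserving_finTwoArrow ℝ
  have e3 : MeasurePreserving (Prod.swap : ℝ×ℝ → ℝ×ℝ) volume volume :=
    Measure.measurePreserving_swap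
  have h := e3.comp (e2.comp e1)
  have hfun : (Prod.swap ∘ ((MeasurableEquiv.finTwoArrow :
      (Fin 2 → ℝ) ≃ᵐ ℝ × ℝ) ∘ (MeasurableEquiv.toLp 2 (Fin 2 → ℝ)).symm))
      = fun q : EuclideanSpace ℝ (Fin 2) => ((q 1 : ℝ), (q 0 : ℝ)) := by
    funext q
    simp [MeasurableEquiv.finTwoArrow]
  rwa [hfun] at h

lemma aux_key (r y t b : ℝ) (m : ℕ) (hy0 : 0 < y)
    (hb1 : r + y/2 < b)
    (ht1 : -(1 - y^2/4 + y*(b - r)/2) < t - 3) (ht2 : t - 3 < 1 - y^2/4 + y*(b - r)/2)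
    (hw2 : 1 - y^2/4 + y*(b - r)/2 < 2) :
    (t - 3)^2 + (b - (r+y))^2 < (t - (2*(m:ℝ)+1))^2 + (b - r)^2 := by
  have hpos : 0 < y * (2*(b - r) - y) := mul_pos hy0 (by linarith)
  rcases m with _|_|_|k
  · push_cast; nlinarith [hpos]
  · push_cast; nlinarith [hpos]
  · push_cast; nlinarith [hpos]
  · have hk0 : (0:ℝ) ≤ (k:ℝ) := Nat.cast_nonneg k
    have h1 : t - 3 < 2 := lt_trans ht2 hw2
    push_cast
    nlinarith [hpos,
      mul_pos (show (0:ℝ) < (k:ℝ)+2 by linarith) (show (0:ℝ) < 2 - (t - 3) by linarith),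
      mul_nonneg hk0 (show (0:ℝ) ≤ 2 - (t - 3) by linarith),
      mul_nonneg hk0 hk0]

lemma aux_volR (y r a c : ℝ) (hy0 : 0 < y) (hac : a ≤ c) (ha : a = r + y/2) :
    (volume : Measure (ℝ × ℝ)) (regionBetween (fun b => 3 - (1 - y^2/4 + y*(b - r)/2))
      (fun b => 3 + (1 - y^2/4 + y*(b - r)/2)) (Set.Ioo a c))
    = ENNReal.ofReal ((2 - y^2/2 - y*r)*(c-a) + y*(c^2-a^2)/2) := by
  set f : ℝ → ℝ := fun b => 3 - (1 - y^2/4 + y*(b - r)/2) with hf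
  set g : ℝ → ℝ := fun b => 3 + (1 - y^2/4 + y*(b - r)/2) with hg
  have hfc : Continuous f := by rw [hf]; fun_prop
  have hgc : Continuous g := by rw [hg]; fun_prop
  have h1 : IntegrableOn f (Set.Ioo a c) volume :=
    (hfc.integrableOn_Icc (a := a) (b := c)).mono_set Set.Ioo_subset_Icc_self
  have h2 : IntegrableOn g (Set.Ioo a c) volume :=
    (hgc.integrableOn_Icc (a := a) (b := c)).mono_set Set.Ioo_subset_Icc_self
  have hle : ∀ b ∈ Set.Ioo a c, f b ≤ g b := by
    intro b hb
    have hb1 : r + y/2 < b := by rw [ha] at hb; exact hb.1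
    show 3 - (1 - y^2/4 + y*(b - r)/2) ≤ 3 + (1 - y^2/4 + y*(b - r)/2)
    nlinarith [mul_pos hy0 (show (0:ℝ) < b - r - y/2 by linarith)]
  have hvol := volume_regionBetween_eq_integral h1 h2 measurableSet_Ioo hle
  rw [Measure.volume_eq_prod, hvol]
  congr 1
  have hgf : (g - f) = fun b => (2 - y^2/2 - y*r) + y * b := by
    funext b
    show (3 + (1 - y^2/4 + y*(b - r)/2)) - (3 - (1 - y^2/4 + y*(b - r)/2)) = _
    ring
  rw [hgf, ← integral_Ioc_eq_integral_Ioo, ← intervalIntegral.integral_of_le hac,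
    intervalIntegral.integral_add intervalIntegrable_const
      ((intervalIntegral.intervalIntegrable_id).const_mul y),
    intervalIntegral.integral_const, intervalIntegral.integral_const_mul, integral_id]
  simp
  ring

lemma aux_Rmeas (y r a c : ℝ) :
    MeasurableSet (regionBetween (fun b => 3 - (1 - y^2/4 + y*(b - r)/2))
      (fun b : ℝ => 3 + (1 - y^2/4 + y*(b - r)/2)) (Set.Ioo a c)) := by
  apply measurableSet_regionBetween
  · fun_prop
  · fun_prop
  · exact measurableSet_Ioo

set_option maxHeartbeats 1000000 in
/-- For `√2 < r ≤ √3`, against the `1 × n` grid `W = {(2i−1, r) : i = 1, …, n}`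
on the board `[0, 2n] × [0, 2r]`, the single point `p = (3, r + y)` with
`0 < y < 2(r − √2)` steals an area strictly greater than `2r`. -/
theorem stmt_11 (n : ℕ) (hn : 3 ≤ n) (r : ℝ) (hr1 : Real.sqrt 2 < r) (hr2 : r ≤ Real.sqrt 3)
    (W : Set (EuclideanSpace ℝ (Fin 2)))
    (hW : W = Set.range fun i : Fin n => pt (2 * (i : ℝ) + 1) r)
    (y : ℝ) (hy0 : 0 < y) (hy1 : y < 2 * (r - Real.sqrt 2))
    (p : EuclideanSpace ℝ (Fin 2)) (hp : p = pt 3 (r + y)) :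
    volume {q | q ∈ bigBoard n r ∧ dist q p < infDist q W} > ENNReal.ofReal (2 * r) := by
  have hs2 : Real.sqrt 2 ^ 2 = 2 := Real.sq_sqrt (by norm_num)
  have hs3 : Real.sqrt 3 ^ 2 = 3 := Real.sq_sqrt (by norm_num)
  have hs2n : (0:ℝ) ≤ Real.sqrt 2 := Real.sqrt_nonneg 2
  have hs3n : (0:ℝ) ≤ Real.sqrt 3 := Real.sqrt_nonneg 3
  have hr0 : (0:ℝ) < r := lt_of_le_of_lt hs2n hr1
  have h2lb : (7/5:ℝ) ≤ Real.sqrt 2 := by nlinarith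
  have hr9 : r ≤ 9/5 := by nlinarith
  have hy8 : y < 4/5 := by linarith
  have hyr : y * r < 2 := by nlinarith
  have hn6 : (6:ℝ) ≤ 2 * n := by
    have : (3:ℝ) ≤ (n:ℝ) := by exact_mod_cast hn
    linarith
  set a : ℝ := r + y/2 with ha
  set c : ℝ := 2*r with hc
  have hac : a < c := by rw [ha, hc]; nlinarith
  have hIgt : 2*r < (2 - y^2/2 - y*r)*(c-a) + y*(c^2-a^2)/2 := by
    rw [ha, hc]
    have hrs : Real.sqrt 2 < r - y/2 := by linarith
    nlinarith [mul_pos (show (0:ℝ) < r - y/2 - Real.sqrt 2 by linarith)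
      (show (0:ℝ) < r - y/2 + Real.sqrt 2 by linarith), hy0]
  have hI0 : (0:ℝ) < (2 - y^2/2 - y*r)*(c-a) + y*(c^2-a^2)/2 := by linarith
  set T : Set (EuclideanSpace ℝ (Fin 2)) :=
    {q | q 1 ∈ Set.Ioo a c ∧ |q 0 - 3| < 1 - y^2/4 + y*(q 1 - r)/2} with hT
  have hsub : T ⊆ {q | q ∈ bigBoard n r ∧ dist q p < infDist q W} := by
    rintro q ⟨⟨hb1, hb2⟩, ht⟩
    rw [ha] at hb1; rw [hc] at hb2
    have habs := abs_lt.mp ht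
    have ht1 := habs.1
    have ht2 := habs.2
    have h5 : y * (q 1 - r) ≤ y * r := mul_le_mul_of_nonneg_left (by linarith) hy0.le
    have hw2 : 1 - y^2/4 + y*(q 1 - r)/2 < 2 := by nlinarith [sq_nonneg y]
    refine ⟨⟨⟨by linarith, by linarith⟩, ⟨by linarith, by linarith⟩⟩, ?_⟩
    have hne : W.Nonempty := by
      rw [hW]
      have : Nonempty (Fin n) := Fin.pos_iff_nonempty.mp (by omega)
      exact Set.range_nonempty _
    have hcpt : IsCompact W := by
      rw [hW]; exact (Set.finite_range _).isCompact
    obtain ⟨w₀, hw₀, hdist⟩ := hcpt.exists_infDist_eq_dist hne q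
    rw [hdist, hp]
    rw [hW] at hw₀
    obtain ⟨i, rfl⟩ := hw₀
    apply aux_dist_pt_lt
    exact aux_key r y (q 0) (q 1) i hy0 hb1 ht1 ht2 hw2
  set R : Set (ℝ × ℝ) := regionBetween (fun b => 3 - (1 - y^2/4 + y*(b - r)/2))
      (fun b => 3 + (1 - y^2/4 + y*(b - r)/2)) (Set.Ioo a c) with hR
  have hTpre : T = (fun q : EuclideanSpace ℝ (Fin 2) => ((q 1 : ℝ), (q 0 : ℝ))) ⁻¹' R := by
    ext q
    simp only [hT, hR, regionBetween, Set.mem_preimage, Set.mem_setOf_eq, Set.mem_Ioo, abs_lt]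
    constructor
    · rintro ⟨h1, h2, h3⟩; exact ⟨h1, by linarith, by linarith⟩
    · rintro ⟨h1, h2, h3⟩; exact ⟨h1, by linarith, by linarith⟩
  have hvolT : volume T = volume R := by
    rw [hTpre]
    exact aux_swap_mp.measure_preimage (aux_Rmeas y r a c).nullMeasurableSet
  have hvolR : volume R = ENNReal.ofReal ((2 - y^2/2 - y*r)*(c-a) + y*(c^2-a^2)/2) :=
    aux_volR y r a c hy0 hac.le ha
  calc ENNReal.ofReal (2*r)
      < ENNReal.ofReal ((2 - y^2/2 - y*r)*(c-a) + y*(c^2-a^2)/2) := by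
        rw [ENNReal.ofReal_lt_ofReal_iff hI0]
        exact hIgt
    _ = volume R := hvolR.symm
    _ = volume T := hvolT.symm
    _ ≤ volume {q | q ∈ bigBoard n r ∧ dist q p < infDist q W} := measure_mono hsub
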